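/- Let A be an n-by-n reciprocal matrix with n ≥ 2. Then for every i ∈ {1,…,n}, the set E(A;i) is PWL connected. -/

import Mathlib

def PosVec {ι : Type*} (w : ι → ℝ) : Prop := ∀ i, 0 < w i

def IsReciprocal {ι : Type*} (A : Matrix ι ι ℝ) : Prop :=
  (∀ i j, 0 < A i j) ∧ ∀ i j, A j i = 1 / A i j

def IsEfficient {ι : Type*} (A : Matrix ι ι ℝ) (w : ι → ℝ) : Prop :=
  PosVec w ∧ ∀ v : ι → ℝ, PosVec v →
    (∀ i j, |A i j - v i / v j| ≤ |A i j - w i / w j|) →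
    ∃ c : ℝ, 0 < c ∧ v = c • w

/-- The principal submatrix `A(k)` of `A` obtained by deleting row and column `k`. -/
def delMat {n : ℕ} (A : Matrix (Fin n) (Fin n) ℝ) (k : Fin n) :
    Matrix {i : Fin n // i ≠ k} {i : Fin n // i ≠ k} ℝ :=
  Matrix.of fun a b => A a.1 b.1

/-- The vector `w(k)` obtained from `w` by deleting the `k`-th entry. -/
def delVec {n : ℕ} (w : Fin n → ℝ) (k : Fin n) : {i : Fin n // i ≠ k} → ℝ :=
  fun a => w a.1

/-- `E(A)`, the set of efficient vectors for `A`. -/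
def Eset {ι : Type*} (A : Matrix ι ι ℝ) : Set (ι → ℝ) := {w | IsEfficient A w}

/-- `E(A; i)`, the set of efficient vectors `w` for `A` such that `w(i)` is efficient
for `A(i)`. -/
def EsetSub {n : ℕ} (A : Matrix (Fin n) (Fin n) ℝ) (i : Fin n) : Set (Fin n → ℝ) :=
  {w | IsEfficient A w ∧ IsEfficient (delMat A i) (delVec w i)}

/-- A set `S` of vectors is PWL (piecewise linearly) connected if any two of its points are
joined by a finite polygonal path whose vertices and segments all lie in `S`. -/
def PWLConnected {ι : Type*} (S : Set (ι → ℝ)) : Prop :=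
  ∀ x ∈ S, ∀ y ∈ S, ∃ (s : ℕ) (u : ℕ → ι → ℝ), u 0 = x ∧ u s = y ∧
    (∀ i ≤ s, u i ∈ S) ∧
    ∀ i < s, ∀ t : ℝ, 0 < t → t < 1 → (t • u i + (1 - t) • u (i + 1)) ∈ S

/-! ### Auxiliary development -/

open Relation
set_option linter.unusedSectionVars false

section Aux

variable {ι : Type*} [Fintype ι] [DecidableEq ι]

/-- The comparison digraph of `A` at `w`. -/
def edgeR (A : Matrix ι ι ℝ) (w : ι → ℝ) (a b : ι) : Prop := w a ≤ A a b * w b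

/-- Strong connectivity of the comparison digraph. -/
def SCR (A : Matrix ι ι ℝ) (w : ι → ℝ) : Prop :=
  ∀ a b : ι, ReflTransGen (edgeR A w) a b

/-- general submatrix -/
def subMat (A : Matrix ι ι ℝ) (i : ι) : Matrix {j : ι // j ≠ i} {j : ι // j ≠ i} ℝ :=
  Matrix.of fun a b => A a.1 b.1

def subVec (w : ι → ℝ) (i : ι) : {j : ι // j ≠ i} → ℝ := fun a => w a.1

def EsetSubG (A : Matrix ι ι ℝ) (i : ι) : Set (ι → ℝ) :=
  {w | IsEfficient A w ∧ IsEfficient (subMat A i) (subVec w i)}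

/-- `JoinedPWL S x y` : there is a PWL path within `S` from `x` to `y`. -/
def JoinedPWL (S : Set (ι → ℝ)) (x y : ι → ℝ) : Prop :=
  ∃ (s : ℕ) (u : ℕ → ι → ℝ), u 0 = x ∧ u s = y ∧
    (∀ i ≤ s, u i ∈ S) ∧
    ∀ i < s, ∀ t : ℝ, 0 < t → t < 1 → (t • u i + (1 - t) • u (i + 1)) ∈ S

variable {A : Matrix ι ι ℝ} {w v y : ι → ℝ} {i : ι}

lemma recip_pos (hA : IsReciprocal A) (a b : ι) : 0 < A a b := hA.1 a b

lemma recip_diag (hA : IsReciprocal A) (a : ι) : A a a = 1 := by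
  have h := hA.2 a a
  have hp := hA.1 a a
  field_simp at h
  nlinarith

lemma recip_sub (hA : IsReciprocal A) (i : ι) : IsReciprocal (subMat A i) :=
  ⟨fun a b => hA.1 a.1 b.1, fun a b => hA.2 a.1 b.1⟩

lemma semicomplete (hA : IsReciprocal A) (hw : PosVec w) (a b : ι) :
    edgeR A w a b ∨ edgeR A w b a := by
  by_contra h
  push_neg at h
  obtain ⟨h1, h2⟩ := h
  unfold edgeR at h1 h2
  push_neg at h1 h2
  have hba := hA.2 a b
  have hpos := hA.1 a b
  have hwa := hw a
  have hwb := hw b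
  rw [hba] at h2
  have h4 := mul_lt_mul_of_pos_right h2 hpos
  have h5 : 1 / A a b * A a b = 1 := one_div_mul_cancel (ne_of_gt hpos)
  nlinarith

lemma SCR_imp_efficient [Nonempty ι] (hA : IsReciprocal A) (hw : PosVec w) (hsc : SCR A w) :
    IsEfficient A w := by
  refine ⟨hw, fun v hv hdom => ?_⟩
  obtain ⟨k, -, hk⟩ := Finset.exists_min_image Finset.univ (fun j => v j / w j)
    ⟨Classical.arbitrary ι, Finset.mem_univ _⟩
  -- every vertex reachable from k satisfies v j * w k = v k * w j
  have key : ∀ j, ReflTransGen (edgeR A w) k j → v j * w k = v k * w j := by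
    intro j hj
    induction hj with
    | refl => ring
    | tail hr he ih =>
      rename_i b c
      -- he : edgeR A w b c, ih : v b * w k = v k * w b
      have hwb := hw b; have hwc := hw c; have hwk := hw k
      have hvb := hv b; have hvc := hv c; have hvk := hv k
      have hAbc := hA.1 b c
      have hratio : w b / w c ≤ A b c := by
        rw [div_le_iff₀ hwc]; exact he
      have hd := hdom b c
      have habs : |A b c - w b / w c| = A b c - w b / w c := by
        rw [abs_of_nonneg]; linarith
      rw [habs] at hd
      have h1 : A b c - v b / v c ≤ A b c - w b / w c := le_trans (le_abs_self _) hd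
      have h2 : w b / w c ≤ v b / v c := by linarith
      rw [div_le_div_iff₀ hwc hvc] at h2
      -- w b * v c ≤ v b * w c
      -- with ih : v b * w k = v k * w b, want v c * w k = v k * w c
      -- minimality: v k / w k ≤ v c / w c, i.e. v k * w c ≤ v c * w k
      have hmin := hk c (Finset.mem_univ _)
      rw [div_le_div_iff₀ hwk hwc] at hmin
      -- other direction: from h2 and ih : v c * w k ≤ v k * w c
      have : v c * w k ≤ v k * w c := by
        have hh : w b * v c * w k ≤ v b * w c * w k := by nlinarith
        rw [mul_right_comm] at hh
        -- w b * w k * v c ≤ v b * w k * w c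
        have hh2 : w b * (v c * w k) ≤ (v b * w k) * w c := by ring_nf; ring_nf at hh; linarith
        have hh3 : v b * w k = v k * w b := by
          have := ih; nlinarith [this]
        rw [hh3] at hh2
        have hh4 : w b * (v c * w k) ≤ w b * (v k * w c) := by ring_nf; ring_nf at hh2; linarith
        exact le_of_mul_le_mul_left hh4 hwb
      linarith
  refine ⟨v k / w k, div_pos (hv k) (hw k), ?_⟩
  funext j
  have hj := key j (hsc k j)
  have hwk := hw k; have hwj := hw j
  simp only [Pi.smul_apply, smul_eq_mul]
  field_simp
  linarith [hj]

lemma rtg_first {α : Type*} {e : α → α → Prop} {a b : α} (h : ReflTransGen e a b)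
    (hne : a ≠ b) : ∃ c, c ≠ a ∧ e a c := by
  induction h with
  | refl => exact absurd rfl hne
  | tail hr he ih =>
    rename_i y c
    by_cases hya : y = a
    · subst hya
      by_cases hca : c = y
      · exact absurd hca.symm hne
      · exact ⟨c, hca, he⟩
    · exact ih (fun h => hya h.symm)

lemma rtg_last {α : Type*} {e : α → α → Prop} {a b : α} (h : ReflTransGen e a b)
    (hne : a ≠ b) : ∃ c, c ≠ b ∧ e c b := by
  induction h with
  | refl => exact absurd rfl hne
  | tail hr he ih =>
    rename_i y c
    by_cases hyc : y = c
    · subst hyc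
      exact ih (fun h => hne (h ▸ hr.cases_head.elim (fun h' => h') (fun _ => h) ▸ rfl))
    · exact ⟨y, hyc, he⟩

lemma efficient_imp_SCR (hA : IsReciprocal A) (he : IsEfficient A w) : SCR A w := by
  classical
  by_contra hns
  unfold SCR at hns
  push_neg at hns
  obtain ⟨a, b, hab⟩ := hns
  have hw := he.1
  set S : Set ι := {j | ReflTransGen (edgeR A w) a j} with hS
  have haS : a ∈ S := ReflTransGen.refl
  have hbS : b ∉ S := hab
  have hclosed : ∀ i ∈ S, ∀ j, edgeR A w i j → j ∈ S := fun i hi j hij => hi.tail hij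
  have hstrict : ∀ i ∈ S, ∀ j, j ∉ S → A i j * w j < w i := by
    intro i hi j hj
    by_contra hle
    push_neg at hle
    exact hj (hclosed i hi j hle)
  set P : Finset (ι × ι) := Finset.univ.filter (fun p => p.1 ∈ S ∧ p.2 ∉ S) with hP
  have hPmem : ∀ p : ι × ι, p ∈ P ↔ (p.1 ∈ S ∧ p.2 ∉ S) := by
    intro p; simp [hP]
  have hPne : P.Nonempty := ⟨(a, b), (hPmem _).2 ⟨haS, hbS⟩⟩
  set ε : ℝ := P.inf' hPne (fun p => 1 - A p.1 p.2 * w p.2 / w p.1) with hε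
  have hε_pos : 0 < ε := by
    rw [hε, Finset.lt_inf'_iff]
    intro p hp
    obtain ⟨hp1, hp2⟩ := (hPmem p).1 hp
    have hs := hstrict p.1 hp1 p.2 hp2
    have hwp := hw p.1
    rw [sub_pos, div_lt_one hwp]
    exact hs
  have hbound : ∀ i ∈ S, ∀ j, j ∉ S → A i j * w j ≤ (1 - ε) * w i := by
    intro i hi j hj
    have hle : ε ≤ 1 - A i j * w j / w i := by
      rw [hε]
      exact Finset.inf'_le _ ((hPmem (i, j)).2 ⟨hi, hj⟩)
    have hwi := hw i
    have h2 : A i j * w j / w i ≤ 1 - ε := by linarith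
    calc A i j * w j = (A i j * w j / w i) * w i := by field_simp
    _ ≤ (1 - ε) * w i := by
        apply mul_le_mul_of_nonneg_right h2 (le_of_lt hwi)
  have hε1 : ε < 1 := by
    have h1 : ε ≤ 1 - A a b * w b / w a := by
      rw [hε]; exact Finset.inf'_le _ ((hPmem (a, b)).2 ⟨haS, hbS⟩)
    have : 0 < A a b * w b / w a := div_pos (mul_pos (hA.1 a b) (hw b)) (hw a)
    linarith
  set v : ι → ℝ := fun j => if j ∈ S then (1 - ε) * w j else w j with hv
  have hvpos : PosVec v := by
    intro j
    rw [hv]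
    by_cases hj : j ∈ S <;> simp [hj]
    · exact mul_pos (by linarith) (hw j)
    · exact hw j
  have hdom : ∀ i j, |A i j - v i / v j| ≤ |A i j - w i / w j| := by
    intro i j
    have hwi := hw i; have hwj := hw j
    by_cases hi : i ∈ S <;> by_cases hj : j ∈ S
    · have : v i / v j = w i / w j := by
        rw [hv]; simp only [hi, hj, if_pos]
        rw [mul_div_mul_left _ _ (by linarith : (1:ℝ) - ε ≠ 0)]
      rw [this]
    · -- i ∈ S, j ∉ S
      have hvij : v i / v j = (1 - ε) * w i / w j := by
        rw [hv]; simp only [hi, hj, if_pos, if_neg, not_false_iff]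
      have hs := hstrict i hi j hj
      have hb := hbound i hi j hj
      have hr : A i j < w i / w j := by rw [lt_div_iff₀ hwj]; linarith [mul_comm (w i) (w j)]
      have hr' : A i j ≤ (1 - ε) * w i / w j := by
        rw [le_div_iff₀ hwj]; linarith
      have hr'' : (1 - ε) * w i / w j ≤ w i / w j := by
        rw [div_le_div_iff₀ hwj hwj]
        nlinarith [mul_pos hε_pos (mul_pos hwi hwj)]
      rw [hvij, abs_of_nonpos (by linarith), abs_of_nonpos (by linarith)]
      linarith
    · -- i ∉ S, j ∈ S
      have hvij : v i / v j = w i / ((1 - ε) * w j) := by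
        rw [hv]; simp only [hi, hj, if_pos, if_neg, not_false_iff]
      have hApos := hA.1 i j
      have hcan : 1 / A i j * A i j = 1 := one_div_mul_cancel (ne_of_gt hApos)
      have hpos2 : 0 < (1 - ε) * w j := mul_pos (by linarith) hwj
      have h1 : w i < A i j * w j := by
        have hst := hstrict j hj i hi
        rw [hA.2 i j] at hst
        nlinarith
      have h2 : w i ≤ A i j * ((1 - ε) * w j) := by
        have hbd := hbound j hj i hi
        rw [hA.2 i j] at hbd
        nlinarith
      have hr : w i / w j < A i j := (div_lt_iff₀ hwj).2 (by linarith [mul_comm (A i j) (w j)])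
      have hr' : w i / ((1 - ε) * w j) ≤ A i j := (div_le_iff₀ hpos2).2 (by linarith [mul_comm (A i j) ((1 - ε) * w j)])
      have hrr : w i / w j ≤ w i / ((1 - ε) * w j) := by
        rw [div_le_div_iff₀ hwj hpos2]
        nlinarith [mul_pos hε_pos (mul_pos hwi hwj)]
      rw [hvij, abs_of_nonneg (by linarith), abs_of_nonneg (by linarith)]
      linarith
    · have : v i / v j = w i / w j := by rw [hv]; simp only [hi, hj, if_neg, not_false_iff]
      rw [this]
  obtain ⟨c, hc, hveq⟩ := he.2 v hvpos hdom
  have hcb : v b = c * w b := by rw [hveq]; simp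
  have hca : v a = c * w a := by rw [hveq]; simp
  rw [hv] at hcb hca
  simp only [hbS, haS, if_pos, if_neg, not_false_iff] at hcb hca
  have hc1 : c = 1 := by
    have := hw b; field_simp at hcb; nlinarith
  rw [hc1] at hca
  have := hw a
  nlinarith

lemma exists_out (hA : IsReciprocal A) (he : IsEfficient A w) (i : ι)
    (hcard : ∃ j : ι, j ≠ i) : ∃ j, j ≠ i ∧ edgeR A w i j := by
  obtain ⟨x, hx⟩ := hcard
  have hsc := efficient_imp_SCR hA he
  obtain ⟨c, hc, hic⟩ := rtg_first (hsc i x) (fun h => hx h.symm)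
  exact ⟨c, hc, hic⟩

lemma exists_in (hA : IsReciprocal A) (he : IsEfficient A w) (i : ι)
    (hcard : ∃ j : ι, j ≠ i) : ∃ j, j ≠ i ∧ edgeR A w j i := by
  obtain ⟨x, hx⟩ := hcard
  have hsc := efficient_imp_SCR hA he
  obtain ⟨c, hc, hci⟩ := rtg_last (hsc x i) hx
  exact ⟨c, hc, hci⟩

/-- strong connectivity from strong connectivity of a submatrix plus in/out edges at `i`. -/
lemma SCR_of_sub (hsub : SCR (subMat A i) (subVec w i))
    (hout : ∃ j, j ≠ i ∧ edgeR A w i j) (hin : ∃ j, j ≠ i ∧ edgeR A w j i) :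
    SCR A w := by
  obtain ⟨jo, hjo, hjoe⟩ := hout
  obtain ⟨ji, hji, hjie⟩ := hin
  have hlift : ∀ (a b : {j : ι // j ≠ i}), ReflTransGen (edgeR A w) a.1 b.1 := by
    intro a b
    exact ReflTransGen.lift Subtype.val (fun x y h => h) _ _ (hsub a b)
  intro a b
  by_cases ha : a = i <;> by_cases hb : b = i
  · rw [ha, hb]
  · rw [ha]
    exact ReflTransGen.head hjoe (hlift ⟨jo, hjo⟩ ⟨b, hb⟩)
  · rw [hb]
    exact ReflTransGen.tail (hlift ⟨a, ha⟩ ⟨ji, hji⟩) hjie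
  · exact hlift ⟨a, ha⟩ ⟨b, hb⟩

/-- a covering bidirectional chain gives strong connectivity. -/
lemma chain_SCR {l : List ι} (hcov : ∀ x : ι, x ∈ l)
    (hch : l.IsChain (fun a b => edgeR A w a b ∧ edgeR A w b a)) : SCR A w := by
  classical
  have hch' := List.isChain_iff_getElem.mp hch
  have fwd : ∀ (p : ℕ) (hp : p < l.length) (q : ℕ), p ≤ q → ∀ (hq : q < l.length),
      ReflTransGen (edgeR A w) (l.get ⟨p, hp⟩) (l.get ⟨q, hq⟩) := by
    intro p hp q hpq
    induction q, hpq using Nat.le_induction with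
    | base => intro hq; exact ReflTransGen.refl
    | succ m hm ih =>
      intro hq
      have hm' : m < l.length := Nat.lt_of_succ_lt hq
      have hstep := hch' m (by omega)
      exact ReflTransGen.tail (ih hm') hstep.1
  have bwd : ∀ (p : ℕ) (hp : p < l.length) (q : ℕ), p ≤ q → ∀ (hq : q < l.length),
      ReflTransGen (edgeR A w) (l.get ⟨q, hq⟩) (l.get ⟨p, hp⟩) := by
    intro p hp q hpq
    induction q, hpq using Nat.le_induction with
    | base => intro hq; exact ReflTransGen.refl
    | succ m hm ih =>
      intro hq
      have hm' : m < l.length := Nat.lt_of_succ_lt hq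
      have hstep := hch' m (by omega)
      exact ReflTransGen.head hstep.2 (ih hm')
  intro a b
  have ha := hcov a
  have hb := hcov b
  have hla : l.idxOf a < l.length := List.idxOf_lt_length_iff.2 ha
  have hlb : l.idxOf b < l.length := List.idxOf_lt_length_iff.2 hb
  have hga : l.get ⟨l.idxOf a, hla⟩ = a := List.idxOf_get hla
  have hgb : l.get ⟨l.idxOf b, hlb⟩ = b := List.idxOf_get hlb
  rcases le_or_gt (l.idxOf a) (l.idxOf b) with h | h
  · have := fwd (l.idxOf a) hla (l.idxOf b) h hlb
    rwa [hga, hgb] at this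
  · have := bwd (l.idxOf b) hlb (l.idxOf a) (le_of_lt h) hla
    rwa [hga, hgb] at this

lemma insert_chain {e : ι → ι → Prop} (hsemi : ∀ a b : ι, a ≠ b → e a b ∨ e b a) :
    ∀ (l : List ι) (x : ι), x ∉ l → l.IsChain e →
    ∃ l' : List ι, l'.Perm (x :: l) ∧ l'.IsChain e ∧
      (l'.head? = some x ∨ l'.head? = l.head?) := by
  classical
  intro l
  induction l with
  | nil => exact fun x _ _ => ⟨[x], List.Perm.refl _, List.isChain_singleton x, Or.inl rfl⟩
  | cons a t ih =>
    intro x hx hch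
    have hxa : x ≠ a := fun h => hx (h ▸ List.mem_cons_self)
    have hxt : x ∉ t := fun h => hx (List.mem_cons_of_mem a h)
    by_cases hexa : e x a
    · exact ⟨x :: a :: t, List.Perm.refl _, List.isChain_cons_cons.2 ⟨hexa, hch⟩, Or.inl rfl⟩
    · have heax : e a x := (hsemi x a hxa).resolve_left hexa
      obtain ⟨l'', hperm, hch'', hhead⟩ := ih x hxt (List.IsChain.tail hch)
      refine ⟨a :: l'', ?_, ?_, Or.inr rfl⟩
      · exact (hperm.cons a).trans (List.Perm.swap x a t)
      · rw [List.isChain_cons]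
        refine ⟨?_, hch''⟩
        intro y hy
        rcases hhead with h | h
        · rw [h] at hy
          simp at hy
          rwa [hy] at heax
        · rw [h] at hy
          cases t with
          | nil => simp at hy
          | cons b t' =>
            simp at hy
            obtain ⟨h1, -⟩ := List.isChain_cons_cons.1 hch
            rwa [hy] at h1

/-- Rédei-type insertion: a Hamiltonian path exists in any semicomplete digraph. -/
lemma exists_hampath (hA : IsReciprocal A) (hw : PosVec w) :
    ∃ l : List ι, l.Nodup ∧ (∀ x : ι, x ∈ l) ∧ l.IsChain (edgeR A w) := by
  classical
  have hsemi := semicomplete hA hw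
  have hsemi' : ∀ a b : ι, a ≠ b → edgeR A w a b ∨ edgeR A w b a := fun a b _ => hsemi a b
  have key : ∀ L : List ι, L.Nodup → ∃ l : List ι, l.Perm L ∧ l.IsChain (edgeR A w) := by
    intro L
    induction L with
    | nil => exact fun _ => ⟨[], List.Perm.refl _, List.IsChain.nil⟩
    | cons x L ihL =>
      intro hnd
      obtain ⟨l, hperm, hch⟩ := ihL hnd.of_cons
      have hxl : x ∉ l := fun h => (List.nodup_cons.1 hnd).1 (hperm.mem_iff.1 h)
      obtain ⟨l', hperm', hch', -⟩ := insert_chain hsemi' l x hxl hch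
      exact ⟨l', hperm'.trans (hperm.cons x), hch'⟩
  obtain ⟨l, hperm, hch⟩ := key Finset.univ.toList (Finset.nodup_toList (Finset.univ : Finset ι))
  refine ⟨l, hperm.nodup_iff.2 (Finset.nodup_toList (Finset.univ : Finset ι)), ?_, hch⟩
  intro x
  rw [hperm.mem_iff]
  simp

/-- tight vector along a nodup list -/
lemma exists_tight (hA : IsReciprocal A) (l : List ι) (hnd : l.Nodup) :
    ∃ y : ι → ℝ, PosVec y ∧ l.IsChain (fun a b => y a = A a b * y b) := by
  classical
  induction l with
  | nil => exact ⟨fun _ => 1, fun _ => one_pos, List.IsChain.nil⟩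
  | cons a t iht =>
    obtain ⟨y', hy'pos, hy'ch⟩ := iht hnd.of_cons
    cases t with
    | nil => exact ⟨y', hy'pos, List.isChain_singleton a⟩
    | cons b t' =>
      have hab : a ≠ b := by
        intro h
        exact (List.nodup_cons.1 hnd).1 (h ▸ List.mem_cons_self)
      have hat : ∀ u ∈ b :: t', u ≠ a := by
        intro u hu h
        exact (List.nodup_cons.1 hnd).1 (h ▸ hu)
      set y : ι → ℝ := fun v => if v = a then A a b * y' b else y' v with hy
      have hyval : ∀ u ∈ b :: t', y u = y' u := by
        intro u hu
        rw [hy]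
        simp [hat u hu]
      refine ⟨y, ?_, ?_⟩
      · intro v
        rw [hy]
        by_cases hv : v = a <;> simp [hv]
        · exact mul_pos (hA.1 a b) (hy'pos b)
        · exact hy'pos v
      · rw [List.isChain_cons_cons]
        constructor
        · rw [hyval b (List.mem_cons_self), hy]
          simp
        · rw [List.isChain_iff_getElem] at hy'ch ⊢
          intro k hk
          rw [hyval _ (show (b :: t')[k] ∈ b :: t' from List.getElem_mem (by simp at hk ⊢; omega)),
              hyval _ (show (b :: t')[k + 1] ∈ b :: t' from List.getElem_mem (by simp at hk ⊢; omega))]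
          exact hy'ch k hk

/-- the segment between `w` and its tight companion stays efficient. -/
lemma segment_SCR (hA : IsReciprocal A) (hw : PosVec w) (hsc : SCR A w)
    {l : List ι} (hnd : l.Nodup) (hcov : ∀ x : ι, x ∈ l)
    (hch : l.IsChain (edgeR A w)) (hy : PosVec y)
    (hty : l.IsChain (fun a b => y a = A a b * y b))
    {t : ℝ} (ht0 : 0 ≤ t) (ht1 : t ≤ 1) :
    SCR A (t • w + (1 - t) • y) := by
  classical
  set z : ι → ℝ := t • w + (1 - t) • y with hz
  have hzval : ∀ v : ι, z v = t * w v + (1 - t) * y v := by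
    intro v; rw [hz]; simp
  have hch' := List.isChain_iff_getElem.mp hch
  have hty' := List.isChain_iff_getElem.mp hty
  -- monotonicity of w/y along the chain
  have mono : ∀ (p : ℕ) (hp : p < l.length) (q : ℕ), p ≤ q → ∀ (hq : q < l.length),
      w (l.get ⟨p, hp⟩) * y (l.get ⟨q, hq⟩) ≤ w (l.get ⟨q, hq⟩) * y (l.get ⟨p, hp⟩) := by
    intro p hp q hpq
    induction q, hpq using Nat.le_induction with
    | base => intro hq; exact le_of_eq (by ring)
    | succ m hm ih =>
      intro hq
      have hm' : m < l.length := Nat.lt_of_succ_lt hq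
      have hedge := hch' m (by omega)
      have htight := hty' m (by omega)
      have ihm := ih hm'
      set gp := l.get ⟨p, hp⟩
      set gm := l.get ⟨m, hm'⟩
      set gm1 := l.get ⟨m + 1, hq⟩
      have step : w gm * y gm1 ≤ w gm1 * y gm := by
        have h1 : w gm ≤ A gm gm1 * w gm1 := hedge
        have h2 : y gm = A gm gm1 * y gm1 := htight
        nlinarith [hy gm1, hw gm1]
      nlinarith [hw gm, hy gm, hw gp, hy gp, hw gm1, hy gm1, mul_le_mul_of_nonneg_right ihm (hy gm1).le, mul_le_mul_of_nonneg_right step (hy gp).le]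
  -- direct edges of z for backward pairs
  have hdirect : ∀ (p : ℕ) (hp : p < l.length) (q : ℕ) (hq : q < l.length), q ≤ p →
      edgeR A w (l.get ⟨p, hp⟩) (l.get ⟨q, hq⟩) → edgeR A z (l.get ⟨p, hp⟩) (l.get ⟨q, hq⟩) := by
    intro p hp q hq hqp hewz
    set gp := l.get ⟨p, hp⟩
    set gq := l.get ⟨q, hq⟩
    have hmono := mono q hq p hqp hp
    -- w gq * y gp ≤ w gp * y gq
    have hyedge : y gp ≤ A gp gq * y gq := by
      have h1 : y gp * w gq ≤ w gp * y gq := by nlinarith [hmono]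
      have h2 : w gp * y gq ≤ (A gp gq * w gq) * y gq :=
        mul_le_mul_of_nonneg_right hewz (hy gq).le
      have h3 : y gp * w gq ≤ (A gp gq * y gq) * w gq := by nlinarith
      exact le_of_mul_le_mul_right h3 (hw gq)
    show z gp ≤ A gp gq * z gq
    rw [hzval, hzval]
    have e1 := mul_le_mul_of_nonneg_left hewz ht0
    have e2 := mul_le_mul_of_nonneg_left hyedge (by linarith : (0:ℝ) ≤ 1 - t)
    nlinarith
  -- consecutive forward z-edges
  have hfwdedge : ∀ (k : ℕ) (hk : k < l.length - 1),
      edgeR A z (l.get ⟨k, by omega⟩) (l.get ⟨k + 1, by omega⟩) := by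
    intro k hk
    have hedge := hch' k (by omega)
    have htight := hty' k (by omega)
    show z _ ≤ A _ _ * z _
    simp only [List.get_eq_getElem]
    rw [hzval, hzval]
    have e1 := mul_le_mul_of_nonneg_left hedge ht0
    nlinarith [htight]
  have fwd : ∀ (p : ℕ) (hp : p < l.length) (q : ℕ), p ≤ q → ∀ (hq : q < l.length),
      ReflTransGen (edgeR A z) (l.get ⟨p, hp⟩) (l.get ⟨q, hq⟩) := by
    intro p hp q hpq
    induction q, hpq using Nat.le_induction with
    | base => intro hq; exact ReflTransGen.refl
    | succ m hm ih =>
      intro hq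
      have hm' : m < l.length := Nat.lt_of_succ_lt hq
      exact ReflTransGen.tail (ih hm') (hfwdedge m (by omega))
  -- a single w-edge can be simulated in z
  have hop : ∀ c d : ι, edgeR A w c d → ReflTransGen (edgeR A z) c d := by
    intro c d hcd
    have hc := hcov c
    have hd := hcov d
    have hlc : l.idxOf c < l.length := List.idxOf_lt_length_iff.2 hc
    have hld : l.idxOf d < l.length := List.idxOf_lt_length_iff.2 hd
    have hgc : l.get ⟨l.idxOf c, hlc⟩ = c := List.idxOf_get hlc
    have hgd : l.get ⟨l.idxOf d, hld⟩ = d := List.idxOf_get hld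
    rcases le_or_gt (l.idxOf c) (l.idxOf d) with h | h
    · have := fwd (l.idxOf c) hlc (l.idxOf d) h hld
      rwa [hgc, hgd] at this
    · have := hdirect (l.idxOf c) hlc (l.idxOf d) hld (le_of_lt h)
        (by rwa [hgc, hgd])
      rw [hgc, hgd] at this
      exact ReflTransGen.single this
  intro a b
  have hab := hsc a b
  induction hab with
  | refl => exact ReflTransGen.refl
  | tail hr he ih => exact ReflTransGen.trans ih (hop _ _ he)

/-- characterization of `EsetSubG`. -/
lemma mem_EsetSubG_iff (hA : IsReciprocal A) (hcard : ∃ j : ι, j ≠ i) :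
    w ∈ EsetSubG A i ↔ PosVec w ∧ subVec w i ∈ Eset (subMat A i) ∧
      (∃ j, j ≠ i ∧ w i ≤ A i j * w j) ∧ (∃ j, j ≠ i ∧ w j ≤ A j i * w i) := by
  constructor
  · rintro ⟨heff, hsub⟩
    exact ⟨heff.1, hsub, exists_out hA heff i hcard, exists_in hA heff i hcard⟩
  · rintro ⟨hpos, hsub, hout, hin⟩
    haveI : Nonempty ι := ⟨i⟩
    have hsubSCR : SCR (subMat A i) (subVec w i) := efficient_imp_SCR (recip_sub hA i) hsub
    have hSCR : SCR A w := SCR_of_sub hsubSCR hout hin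
    exact ⟨SCR_imp_efficient hA hpos hSCR, hsub⟩

/-- JoinedPWL is reflexive-ish / symmetric / transitive / contains segments -/
lemma JoinedPWL.of_seg {S : Set (ι → ℝ)} {x y : ι → ℝ} (hx : x ∈ S) (hy : y ∈ S)
    (h : ∀ t : ℝ, 0 < t → t < 1 → (t • x + (1 - t) • y) ∈ S) : JoinedPWL S x y := by
  refine ⟨1, fun k => if k = 0 then x else y, by simp, by simp, ?_, ?_⟩
  · intro k hk
    interval_cases k <;> simp [hx, hy]
  · intro k hk t ht0 ht1
    have hk0 : k = 0 := by omega
    subst hk0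
    simpa using h t ht0 ht1

lemma JoinedPWL.trans {S : Set (ι → ℝ)} {x y z : ι → ℝ} (h1 : JoinedPWL S x y)
    (h2 : JoinedPWL S y z) : JoinedPWL S x z := by
  obtain ⟨s1, u1, hu10, hu1s, hmem1, hseg1⟩ := h1
  obtain ⟨s2, u2, hu20, hu2s, hmem2, hseg2⟩ := h2
  refine ⟨s1 + s2, fun k => if k < s1 then u1 k else u2 (k - s1), ?_, ?_, ?_, ?_⟩
  · by_cases h : 0 < s1
    · simp [h, hu10]
    · have hs1 : s1 = 0 := by omega
      subst hs1
      simp only [Nat.lt_irrefl, if_neg, Nat.sub_zero, not_false_iff]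
      rw [hu20, ← hu1s, hu10]
  · have : ¬ (s1 + s2 < s1) := by omega
    simp only [this, if_false]
    rw [Nat.add_sub_cancel_left, hu2s]
  · intro k hk
    by_cases h : k < s1
    · simp only [h, if_true]
      exact hmem1 k (le_of_lt h)
    · simp only [h, if_false]
      exact hmem2 (k - s1) (by omega)
  · intro k hk t ht0 ht1
    by_cases h : k + 1 < s1
    · have hk1 : k < s1 := by omega
      simp only [h, hk1, if_true]
      exact hseg1 k hk1 t ht0 ht1
    · by_cases h' : k < s1
      · -- k + 1 = s1
        have hk1 : k + 1 = s1 := by omega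
        simp only [h, h', if_true, if_false]
        have : u2 (k + 1 - s1) = u1 (k + 1) := by
          rw [hk1, Nat.sub_self, hu20, ← hu1s]
        rw [this]
        exact hseg1 k h' t ht0 ht1
      · simp only [h, h', if_false]
        have hkk : k - s1 + 1 = k + 1 - s1 := by omega
        rw [← hkk]
        exact hseg2 (k - s1) (by omega) t ht0 ht1

lemma JoinedPWL.mono {S T : Set (ι → ℝ)} (hST : S ⊆ T) {x y : ι → ℝ}
    (h : JoinedPWL S x y) : JoinedPWL T x y := by
  obtain ⟨s, u, h0, hs, hmem, hseg⟩ := h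
  exact ⟨s, u, h0, hs, fun k hk => hST (hmem k hk), fun k hk t ht0 ht1 => hST (hseg k hk t ht0 ht1)⟩

/-- segments between points of `EsetSubG A i` with the same deleted vector stay inside. -/
lemma seg_mem_EsetSubG (hA : IsReciprocal A) (hcard : ∃ j : ι, j ≠ i)
    {p q : ι → ℝ} (hp : p ∈ EsetSubG A i) (hq : q ∈ EsetSubG A i)
    (hpq : ∀ x : ι, x ≠ i → p x = q x) {t : ℝ} (ht0 : 0 ≤ t) (ht1 : t ≤ 1) :
    t • p + (1 - t) • q ∈ EsetSubG A i := by
  rw [mem_EsetSubG_iff hA hcard] at hp hq ⊢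
  obtain ⟨hppos, hpsub, ⟨j1, hj1, hout1⟩, ⟨j2, hj2, hin1⟩⟩ := hp
  obtain ⟨hqpos, hqsub, ⟨j0, hj0, hout0⟩, ⟨j3, hj3, hin0⟩⟩ := hq
  set r : ι → ℝ := t • p + (1 - t) • q with hr
  have hrval : ∀ v : ι, r v = t * p v + (1 - t) * q v := by
    intro v; rw [hr]; simp
  have hrne : ∀ x : ι, x ≠ i → r x = p x := by
    intro x hx
    rw [hrval, hpq x hx]; ring
  have hrpos : PosVec r := by
    intro v
    rw [hrval]
    rcases eq_or_lt_of_le ht0 with h | h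
    · rw [← h]; simpa using hqpos v
    · nlinarith [mul_pos h (hppos v), mul_nonneg (by linarith : (0:ℝ) ≤ 1 - t) (hqpos v).le]
  have hri_le : r i ≤ max (p i) (q i) := by
    rw [hrval]
    rcases le_total (p i) (q i) with h | h
    · rw [max_eq_right h]; nlinarith [mul_nonneg ht0 (sub_nonneg.2 h)]
    · rw [max_eq_left h]; nlinarith [mul_nonneg (by linarith : (0:ℝ) ≤ 1 - t) (sub_nonneg.2 h)]
  have hri_ge : min (p i) (q i) ≤ r i := by
    rw [hrval]
    rcases le_total (p i) (q i) with h | h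
    · rw [min_eq_left h]; nlinarith [mul_nonneg (by linarith : (0:ℝ) ≤ 1 - t) (sub_nonneg.2 h)]
    · rw [min_eq_right h]; nlinarith [mul_nonneg ht0 (sub_nonneg.2 h)]
  refine ⟨hrpos, ?_, ?_, ?_⟩
  · have : subVec r i = subVec p i := by
      funext a
      exact hrne a.1 a.2
    rw [this]
    exact hpsub
  · -- out-edge from the endpoint with larger i-coordinate
    rcases le_total (q i) (p i) with h | h
    · refine ⟨j1, hj1, ?_⟩
      rw [hrne j1 hj1]
      calc r i ≤ max (p i) (q i) := hri_le
      _ = p i := max_eq_left h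
      _ ≤ A i j1 * p j1 := hout1
    · refine ⟨j0, hj0, ?_⟩
      rw [hrne j0 hj0, hpq j0 hj0]
      calc r i ≤ max (p i) (q i) := hri_le
      _ = q i := max_eq_right h
      _ ≤ A i j0 * q j0 := hout0
  · -- in-edge from the endpoint with smaller i-coordinate
    rcases le_total (p i) (q i) with h | h
    · refine ⟨j2, hj2, ?_⟩
      rw [hrne j2 hj2]
      calc p j2 ≤ A j2 i * p i := hin1
      _ ≤ A j2 i * r i := by
          have := hri_ge
          rw [min_eq_left h] at this
          exact mul_le_mul_of_nonneg_left this (le_of_lt (hA.1 j2 i))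
    · refine ⟨j3, hj3, ?_⟩
      rw [hrne j3 hj3, hpq j3 hj3]
      calc q j3 ≤ A j3 i * q i := hin0
      _ ≤ A j3 i * r i := by
          have := hri_ge
          rw [min_eq_right h] at this
          exact mul_le_mul_of_nonneg_left this (le_of_lt (hA.1 j3 i))

/-- Lifting a path in `E(A(i))` to `E(A;i)`: if the reduced efficient set is PWL connected,
any two elements of `EsetSubG A i` are joined within it. -/
lemma joined_EsetSubG (hA : IsReciprocal A) (hcard : ∃ j : ι, j ≠ i)
    (hconn : PWLConnected (Eset (subMat A i)))
    {w w' : ι → ℝ} (hw : w ∈ EsetSubG A i) (hw' : w' ∈ EsetSubG A i) :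
    JoinedPWL (EsetSubG A i) w w' := by
  classical
  obtain ⟨j0, hj0⟩ := hcard
  set lift : ({j : ι // j ≠ i} → ℝ) → (ι → ℝ) :=
    fun u x => if h : x = i then A i j0 * u ⟨j0, hj0⟩ else u ⟨x, h⟩ with hlift
  have hliftval_ne : ∀ (u : {j : ι // j ≠ i} → ℝ) (x : ι) (hx : x ≠ i),
      lift u x = u ⟨x, hx⟩ := by
    intro u x hx; rw [hlift]; simp [hx]
  have hliftval_i : ∀ (u : {j : ι // j ≠ i} → ℝ), lift u i = A i j0 * u ⟨j0, hj0⟩ := by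
    intro u; rw [hlift]; simp
  have hsublift : ∀ (u : {j : ι // j ≠ i} → ℝ), subVec (lift u) i = u := by
    intro u
    funext a
    show lift u a.1 = u a
    rw [hliftval_ne u a.1 a.2]
  have hliftmem : ∀ (u : {j : ι // j ≠ i} → ℝ), u ∈ Eset (subMat A i) →
      lift u ∈ EsetSubG A i := by
    intro u hu
    have hupos : PosVec u := hu.1
    rw [mem_EsetSubG_iff hA ⟨j0, hj0⟩]
    refine ⟨?_, ?_, ⟨j0, hj0, ?_⟩, ⟨j0, hj0, ?_⟩⟩
    · intro x
      by_cases hx : x = i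
      · subst hx; rw [hliftval_i]; exact mul_pos (hA.1 _ _) (hupos _)
      · rw [hliftval_ne u x hx]; exact hupos _
    · rw [hsublift]; exact hu
    · rw [hliftval_i, hliftval_ne u j0 hj0]
    · rw [hliftval_i, hliftval_ne u j0 hj0, hA.2 i j0]
      have hApos := hA.1 i j0
      have : 1 / A i j0 * (A i j0 * u ⟨j0, hj0⟩) = u ⟨j0, hj0⟩ := by
        field_simp
      linarith [this.ge]
  have hwsub : subVec w i ∈ Eset (subMat A i) := hw.2
  have hw'sub : subVec w' i ∈ Eset (subMat A i) := hw'.2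
  obtain ⟨s, u, hu0, hus, hmem, hseg⟩ := hconn _ hwsub _ hw'sub
  have hmid : JoinedPWL (EsetSubG A i) (lift (u 0)) (lift (u s)) := by
    refine ⟨s, fun k => lift (u k), rfl, rfl, ?_, ?_⟩
    · intro k hk
      exact hliftmem _ (hmem k hk)
    · intro k hk t ht0 ht1
      have hcombo : t • lift (u k) + (1 - t) • lift (u (k + 1)) =
          lift (t • u k + (1 - t) • u (k + 1)) := by
        funext x
        by_cases hx : x = i
        · subst hx
          simp only [Pi.add_apply, Pi.smul_apply, smul_eq_mul, hliftval_i]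
          ring
        · simp only [Pi.add_apply, Pi.smul_apply, smul_eq_mul, hliftval_ne _ x hx]
      rw [hcombo]
      exact hliftmem _ (hseg k hk t ht0 ht1)
  rw [hu0, hus] at hmid
  have hlw : lift (subVec w i) ∈ EsetSubG A i := hliftmem _ hwsub
  have hlw' : lift (subVec w' i) ∈ EsetSubG A i := hliftmem _ hw'sub
  have hseg1 : JoinedPWL (EsetSubG A i) w (lift (subVec w i)) := by
    apply JoinedPWL.of_seg hw hlw
    intro t ht0 ht1
    refine seg_mem_EsetSubG hA ⟨j0, hj0⟩ hw hlw ?_ (le_of_lt ht0) (le_of_lt ht1)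
    intro x hx
    rw [hliftval_ne _ x hx]
    rfl
  have hseg2 : JoinedPWL (EsetSubG A i) (lift (subVec w' i)) w' := by
    apply JoinedPWL.of_seg hlw' hw'
    intro t ht0 ht1
    refine seg_mem_EsetSubG hA ⟨j0, hj0⟩ hlw' hw' ?_ (le_of_lt ht0) (le_of_lt ht1)
    intro x hx
    rw [hliftval_ne _ x hx]
    rfl
  exact hseg1.trans (hmid.trans hseg2)

lemma tie_edges (hA : IsReciprocal A) (hz : PosVec y) {a b : ι}
    (h : y a = A a b * y b) : edgeR A y a b ∧ edgeR A y b a := by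
  refine ⟨le_of_eq h, ?_⟩
  show y b ≤ A b a * y a
  rw [hA.2 a b, h]
  have hApos := hA.1 a b
  have : 1 / A a b * (A a b * y b) = y b := by field_simp
  linarith [this.ge]

lemma eff_smul {c : ℝ} (hc : 0 < c) (he : IsEfficient A v) : IsEfficient A (c • v) := by
  refine ⟨fun x => by simpa using mul_pos hc (he.1 x), ?_⟩
  intro v' hv' hdom
  have hdom' : ∀ i j, |A i j - v' i / v' j| ≤ |A i j - v i / v j| := by
    intro i j
    have h := hdom i j
    have : (c • v) i / (c • v) j = v i / v j := by
      simp only [Pi.smul_apply, smul_eq_mul]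
      rw [mul_div_mul_left _ _ (ne_of_gt hc)]
    rwa [this] at h
  obtain ⟨c', hc', hv'eq⟩ := he.2 v' hv' hdom'
  refine ⟨c' / c, div_pos hc' hc, ?_⟩
  funext x
  rw [hv'eq]
  simp only [Pi.smul_apply, smul_eq_mul]
  field_simp

/-- a tight chain covering everything except `a` makes the deleted vector efficient. -/
lemma subchain_eff (hA : IsReciprocal A) {z : ι → ℝ} (hz : PosVec z) {a : ι}
    (hne : ∃ x : ι, x ≠ a) (l : List ι) (hmem : ∀ x ∈ l, x ≠ a)
    (hcov : ∀ x : ι, x ≠ a → x ∈ l)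
    (hch : l.IsChain (fun u v => z u = A u v * z v)) :
    IsEfficient (subMat A a) (subVec z a) := by
  classical
  obtain ⟨x0, hx0⟩ := hne
  haveI : Nonempty {x : ι // x ≠ a} := ⟨⟨x0, hx0⟩⟩
  set l' : List {x : ι // x ≠ a} := l.pmap (fun x hx => ⟨x, hx⟩) hmem with hl'
  have hcov' : ∀ b : {x : ι // x ≠ a}, b ∈ l' := by
    intro b
    rw [hl', List.mem_pmap]
    exact ⟨b.1, hcov b.1 b.2, rfl⟩
  have hsub : IsReciprocal (subMat A a) := recip_sub hA a
  have hzs : PosVec (subVec z a) := fun b => hz b.1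
  have hch' : l'.IsChain (fun u v => edgeR (subMat A a) (subVec z a) u v ∧
      edgeR (subMat A a) (subVec z a) v u) := by
    have h1 : l' = l.attach.map (fun x => (⟨x.1, hmem x.1 x.2⟩ : {x : ι // x ≠ a})) := by
      rw [hl', List.pmap_eq_map_attach]
    rw [h1, List.isChain_map]
    have h2 : l.attach.IsChain (fun u v : {x // x ∈ l} => z u.1 = A u.1 v.1 * z v.1) := by
      have h3 : (l.attach.map Subtype.val).IsChain (fun u v => z u = A u v * z v) := by
        rw [List.attach_map_subtype_val]
        exact hch
      rwa [List.isChain_map] at h3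
    refine h2.imp ?_
    intro u v huv
    exact tie_edges hsub hzs huv
  exact SCR_imp_efficient hsub hzs (chain_SCR hcov' hch')

/-- standalone lift membership. -/
lemma lift_mem_EsetSubG (hA : IsReciprocal A) {i j0 : ι} (hj0 : j0 ≠ i)
    {u : {j : ι // j ≠ i} → ℝ} (hu : u ∈ Eset (subMat A i)) :
    (fun x => if h : x = i then A i j0 * u ⟨j0, hj0⟩ else u ⟨x, h⟩) ∈ EsetSubG A i := by
  classical
  set lf : ι → ℝ := fun x => if h : x = i then A i j0 * u ⟨j0, hj0⟩ else u ⟨x, h⟩ with hlf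
  have hupos : PosVec u := hu.1
  have hval_ne : ∀ (x : ι) (hx : x ≠ i), lf x = u ⟨x, hx⟩ := by
    intro x hx; rw [hlf]; simp [hx]
  have hval_i : lf i = A i j0 * u ⟨j0, hj0⟩ := by rw [hlf]; simp
  rw [mem_EsetSubG_iff hA ⟨j0, hj0⟩]
  refine ⟨?_, ?_, ⟨j0, hj0, ?_⟩, ⟨j0, hj0, ?_⟩⟩
  · intro x
    by_cases hx : x = i
    · subst hx; rw [hval_i]; exact mul_pos (hA.1 _ _) (hupos _)
    · rw [hval_ne x hx]; exact hupos _
  · have : subVec lf i = u := by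
      funext b
      show lf b.1 = u b
      rw [hval_ne b.1 b.2]
    rw [this]; exact hu
  · rw [hval_i, hval_ne j0 hj0]
  · rw [hval_i, hval_ne j0 hj0, hA.2 i j0]
    have hApos := hA.1 i j0
    have : 1 / A i j0 * (A i j0 * u ⟨j0, hj0⟩) = u ⟨j0, hj0⟩ := by field_simp
    linarith [this.ge]

lemma JoinedPWL.symm {S : Set (ι → ℝ)} {x y : ι → ℝ} (h : JoinedPWL S x y) :
    JoinedPWL S y x := by
  obtain ⟨s, u, h0, hs, hmem, hseg⟩ := h
  refine ⟨s, fun k => u (s - k), by simp [hs], by simp [h0], ?_, ?_⟩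
  · intro k hk
    exact hmem (s - k) (by omega)
  · intro k hk t ht0 ht1
    have h1 : s - k - 1 + 1 = s - k := by omega
    have := hseg (s - k - 1) (by omega) (1 - t) (by linarith) (by linarith)
    rw [h1] at this
    have h2 : (1 : ℝ) - (1 - t) = t := by ring
    rw [h2] at this
    show t • u (s - k) + (1 - t) • u (s - (k + 1)) ∈ S
    have h3 : s - (k + 1) = s - k - 1 := by omega
    rw [h3]
    rwa [add_comm] at this

end Aux

/-- Main induction : `E(A)` is PWL connected for every finite index type. -/
lemma Eset_PWLConnected : ∀ (m : ℕ) (ι : Type) (_ : Fintype ι) (_ : DecidableEq ι)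
    (_ : Nonempty ι), Fintype.card ι = m → ∀ A : Matrix ι ι ℝ, IsReciprocal A →
    PWLConnected (Eset A) := by
  intro m
  induction m using Nat.strong_induction_on with
  | _ m IH =>
  intro ι iF iD iN hm A hA w hw w' hw'
  have hwe : IsEfficient A w := hw
  have hw'e : IsEfficient A w' := hw'
  have hm1 : 1 ≤ m := hm ▸ Fintype.card_pos
  show JoinedPWL (Eset A) w w'
  by_cases hm_one : m = 1
  · -- one-element case : every positive vector is efficient
    obtain ⟨x0, hx0⟩ := Fintype.card_eq_one_iff.1 (hm.trans hm_one)
    have heff1 : ∀ v : ι → ℝ, PosVec v → IsEfficient A v := by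
      intro v hv
      refine ⟨hv, fun v' hv' _ => ⟨v' x0 / v x0, div_pos (hv' x0) (hv x0), ?_⟩⟩
      funext j
      have hj : j = x0 := hx0 j
      subst hj
      simp only [Pi.smul_apply, smul_eq_mul]
      have hvj := (hv j).ne'
      field_simp
    refine JoinedPWL.of_seg hw hw' ?_
    intro t ht0 ht1
    refine heff1 _ ?_
    intro x
    simp only [Pi.add_apply, Pi.smul_apply, smul_eq_mul]
    nlinarith [mul_pos ht0 (hwe.1 x), mul_pos (by linarith : (0:ℝ) < 1 - t) (hw'e.1 x)]
  have hm2 : 2 ≤ m := by omega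
  have hone_lt : 1 < Fintype.card ι := by rw [hm]; omega
  by_cases hm_two : m = 2
  · -- two-element case : all efficient vectors are proportional
    have ha := Classical.arbitrary ι
    obtain ⟨b, hb⟩ := Fintype.exists_ne_of_one_lt_card hone_lt ha
    have huniv : ∀ c : ι, c = ha ∨ c = b := by
      intro c
      by_contra hcon
      push_neg at hcon
      obtain ⟨hc1, hc2⟩ := hcon
      have hcard3 : ({ha, b, c} : Finset ι).card = 3 := by
        rw [Finset.card_insert_of_notMem (by simp [Ne.symm hb, Ne.symm hc1]),
            Finset.card_insert_of_notMem (by simp [Ne.symm hc2]), Finset.card_singleton]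
      have hle : ({ha, b, c} : Finset ι).card ≤ Fintype.card ι := by
        rw [← Finset.card_univ]
        exact Finset.card_le_card (Finset.subset_univ _)
      rw [hm, hm_two, hcard3] at hle
      omega
    have tie : ∀ v : ι → ℝ, IsEfficient A v → v ha = A ha b * v b := by
      intro v hv
      have hsc := efficient_imp_SCR hA hv
      obtain ⟨c1, hc1, he1⟩ := rtg_first (hsc ha b) (fun h => hb h.symm)
      have hc1b : c1 = b := (huniv c1).resolve_left hc1
      rw [hc1b] at he1
      obtain ⟨c2, hc2, he2⟩ := rtg_first (hsc b ha) hb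
      have hc2a : c2 = ha := (huniv c2).resolve_right hc2
      rw [hc2a] at he2
      -- he1 : v ha ≤ A ha b * v b ; he2 : v b ≤ A b ha * v ha
      have he2' : A ha b * v b ≤ v ha := by
        have h3 : v b ≤ A b ha * v ha := he2
        rw [hA.2 ha b] at h3
        have hApos := hA.1 ha b
        have h4 := mul_le_mul_of_nonneg_left h3 hApos.le
        have h5 : A ha b * (1 / A ha b * v ha) = v ha := by field_simp
        linarith
      exact le_antisymm he1 he2'
    have hwb := hwe.1 b
    set c0 : ℝ := w' b / w b with hc0
    have hc0pos : 0 < c0 := div_pos (hw'e.1 b) hwb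
    have hprop : w' = c0 • w := by
      funext c
      rcases huniv c with h | h <;> subst h
      · rw [tie w' hw'e]
        simp only [Pi.smul_apply, smul_eq_mul, hc0]
        rw [tie w hwe]
        field_simp
      · simp only [Pi.smul_apply, smul_eq_mul, hc0]
        field_simp
    refine JoinedPWL.of_seg hw hw' ?_
    intro t ht0 ht1
    have hcoeff : 0 < t + (1 - t) * c0 := by nlinarith
    have heq : t • w + (1 - t) • w' = (t + (1 - t) * c0) • w := by
      rw [hprop]
      funext x
      simp only [Pi.add_apply, Pi.smul_apply, smul_eq_mul]
      ring
    rw [heq]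
    exact eff_smul hcoeff hwe
  -- m ≥ 3 (general case; the construction below also works for m = 2 but we
  -- handled it separately to keep the bridge construction simple)
  have hcardsub : ∀ c : ι, Fintype.card {x : ι // x ≠ c} = m - 1 := by
    intro c
    have h1 : Fintype.card {x : ι // ¬ x = c} =
        Fintype.card ι - Fintype.card {x : ι // x = c} := Fintype.card_subtype_compl _
    rw [Fintype.card_subtype_eq, hm] at h1
    exact h1
  have hsubconn : ∀ c : ι, PWLConnected (Eset (subMat A c)) := by
    intro c
    obtain ⟨d, hd⟩ := Fintype.exists_ne_of_one_lt_card hone_lt c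
    exact IH (m - 1) (by omega) {x : ι // x ≠ c} (by infer_instance) (by infer_instance)
      ⟨⟨d, hd⟩⟩ (hcardsub c) _ (recip_sub hA c)
  have hsubset : ∀ c : ι, EsetSubG A c ⊆ Eset A := fun c x hx => hx.1
  -- build a tight companion for each endpoint
  have build : ∀ v : ι → ℝ, IsEfficient A v → ∃ (y : ι → ℝ) (a : ι),
      JoinedPWL (Eset A) v y ∧ y ∈ EsetSubG A a := by
    intro v hv
    obtain ⟨q, hqnd, hqcov, hqch⟩ := exists_hampath hA hv.1
    obtain ⟨y, hypos, hyty⟩ := exists_tight hA q hqnd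
    have hvSCR := efficient_imp_SCR hA hv
    have hybi : q.IsChain (fun a b => edgeR A y a b ∧ edgeR A y b a) :=
      hyty.imp (fun _ _ h => tie_edges hA hypos h)
    have hyeff : IsEfficient A y := SCR_imp_efficient hA hypos (chain_SCR hqcov hybi)
    have hseg : JoinedPWL (Eset A) v y := by
      refine JoinedPWL.of_seg hv hyeff ?_
      intro t ht0 ht1
      have hpos : PosVec (t • v + (1 - t) • y) := by
        intro x
        simp only [Pi.add_apply, Pi.smul_apply, smul_eq_mul]
        nlinarith [mul_pos ht0 (hv.1 x), mul_pos (by linarith : (0:ℝ) < 1 - t) (hypos x)]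
      exact SCR_imp_efficient hA hpos
        (segment_SCR hA hv.1 hvSCR hqnd hqcov hqch hypos hyty ht0.le ht1.le)
    cases q with
    | nil => exact absurd (hqcov (Classical.arbitrary ι)) List.not_mem_nil
    | cons a tq =>
      cases tq with
      | nil =>
        exfalso
        obtain ⟨b, hb⟩ := Fintype.exists_ne_of_one_lt_card hone_lt a
        have hbmem := hqcov b
        simp at hbmem
        exact hb hbmem
      | cons b tq' =>
        have haninb : a ∉ b :: tq' := (List.nodup_cons.1 hqnd).1
        have hba : b ≠ a := by
          intro h
          exact haninb (h ▸ List.mem_cons_self)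
        have htie : y a = A a b * y b := (List.isChain_cons_cons.1 hyty).1
        refine ⟨y, a, hseg, ?_⟩
        rw [mem_EsetSubG_iff hA ⟨b, hba⟩]
        refine ⟨hypos, ?_, ⟨b, hba, (tie_edges hA hypos htie).1⟩,
          ⟨b, hba, (tie_edges hA hypos htie).2⟩⟩
        apply subchain_eff hA hypos ⟨b, hba⟩ (b :: tq')
        · intro x hx h
          exact haninb (h ▸ hx)
        · intro x hx
          have := hqcov x
          rcases List.mem_cons.1 this with h | h
          · exact absurd h hx
          · exact h
        · exact (List.isChain_cons_cons.1 hyty).2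
  obtain ⟨y, a, hpath_w, hy_a⟩ := build w hwe
  obtain ⟨y', a', hpath_w', hy'_a'⟩ := build w' hw'e
  by_cases haa : a = a'
  · subst haa
    exact hpath_w.trans
      (((joined_EsetSubG hA ⟨(Fintype.exists_ne_of_one_lt_card hone_lt a).choose,
          (Fintype.exists_ne_of_one_lt_card hone_lt a).choose_spec⟩
          (hsubconn a) hy_a hy'_a').mono (hsubset a)).trans hpath_w'.symm)
  · -- bridge through a point in both EsetSubG A a and EsetSubG A a'
    have hia' : a' ≠ a := fun h => haa h.symm
    haveI hNE : Nonempty {x : ι // x ≠ a} := ⟨⟨a', hia'⟩⟩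
    set restF : Finset {x : ι // x ≠ a} := Finset.univ.erase ⟨a', hia'⟩ with hrestF
    have hm3 : 3 ≤ m := by omega
    have hrestF_ne : restF.Nonempty := by
      rw [← Finset.card_pos, hrestF, Finset.card_erase_of_mem (Finset.mem_univ _),
        Finset.card_univ, hcardsub a]
      omega
    cases hrest : restF.toList with
    | nil =>
      exfalso
      obtain ⟨e, he⟩ := hrestF_ne
      have := Finset.mem_toList.2 he
      rw [hrest] at this
      exact List.not_mem_nil this
    | cons j0 rest' =>
    have hrest_nd : (j0 :: rest').Nodup := hrest ▸ Finset.nodup_toList restF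
    have hrest_mem : ∀ x : {x : ι // x ≠ a}, x ∈ j0 :: rest' ↔ x ≠ ⟨a', hia'⟩ := by
      intro x
      rw [← hrest, Finset.mem_toList, hrestF, Finset.mem_erase]
      simp
    set r : List {x : ι // x ≠ a} := ⟨a', hia'⟩ :: j0 :: rest' with hr
    have hrnd : r.Nodup := by
      rw [hr, List.nodup_cons]
      refine ⟨fun h => ?_, hrest_nd⟩
      have := (hrest_mem _).1 h
      exact this rfl
    have hrcov : ∀ x : {x : ι // x ≠ a}, x ∈ r := by
      intro x
      rw [hr]
      by_cases hx : x = ⟨a', hia'⟩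
      · rw [hx]; exact List.mem_cons_self
      · exact List.mem_cons_of_mem _ ((hrest_mem x).2 hx)
    obtain ⟨z', hz'pos, hz'ty⟩ := exists_tight (recip_sub hA a) r hrnd
    have hz'eff : IsEfficient (subMat A a) z' :=
      SCR_imp_efficient (recip_sub hA a) hz'pos
        (chain_SCR hrcov (hz'ty.imp (fun _ _ h => tie_edges (recip_sub hA a) hz'pos h)))
    set z : ι → ℝ := fun x => if h : x = a then A a j0.1 * z' ⟨j0.1, j0.2⟩ else z' ⟨x, h⟩
      with hzdef
    have hz_a : z ∈ EsetSubG A a := lift_mem_EsetSubG hA j0.2 hz'eff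
    have hzval_ne : ∀ (x : ι) (hx : x ≠ a), z x = z' ⟨x, hx⟩ := by
      intro x hx; rw [hzdef]; simp [hx]
    have hzval_a : z a = A a j0.1 * z' j0 := by rw [hzdef]; simp
    have hzpos : PosVec z := hz_a.1.1
    have hj0a : j0.1 ≠ a := j0.2
    have hj0i : j0.1 ≠ a' := by
      intro h
      have h2 : j0 = ⟨a', hia'⟩ := Subtype.ext h
      have := (hrest_mem j0).1 (List.mem_cons_self)
      exact this h2
    have h1 : z' ⟨a', hia'⟩ = subMat A a ⟨a', hia'⟩ j0 * z' j0 := (List.isChain_cons_cons.1 hz'ty).1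
    have htie : z a' = A a' j0.1 * z j0.1 := by
      rw [hzval_ne a' hia', hzval_ne j0.1 hj0a]
      exact h1
    have hz_i : z ∈ EsetSubG A a' := by
      rw [mem_EsetSubG_iff hA ⟨a, haa⟩]
      refine ⟨hzpos, ?_, ⟨j0.1, hj0i, le_of_eq htie⟩, ⟨j0.1, hj0i, (tie_edges hA hzpos htie).2⟩⟩
      apply subchain_eff hA hzpos ⟨a, haa⟩ (a :: j0.1 :: rest'.map Subtype.val)
      · intro x hx
        rcases List.mem_cons.1 hx with h | hx2
        · rw [h]; exact haa
        rcases List.mem_cons.1 hx2 with h | hx3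
        · rw [h]; exact hj0i
        · obtain ⟨u, hu, hux⟩ := List.mem_map.1 hx3
          rw [← hux]
          intro h
          have h2 : u = ⟨a', hia'⟩ := Subtype.ext h
          have := (hrest_mem u).1 (List.mem_cons_of_mem j0 hu)
          exact this h2
      · intro x hx
        by_cases hxa : x = a
        · rw [hxa]; exact List.mem_cons_self
        · refine List.mem_cons_of_mem _ ?_
          have hxr : (⟨x, hxa⟩ : {x : ι // x ≠ a}) ∈ j0 :: rest' :=
            (hrest_mem _).2 (fun h => hx (congrArg Subtype.val h))
          rcases List.mem_cons.1 hxr with h | h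
          · rw [show x = j0.1 from congrArg Subtype.val h.symm ▸ rfl]
            exact List.mem_cons_self
          · refine List.mem_cons_of_mem _ ?_
            exact List.mem_map.2 ⟨⟨x, hxa⟩, h, rfl⟩
      · rw [List.isChain_cons_cons]
        constructor
        · rw [hzval_a, hzval_ne j0.1 hj0a]
        · have h2 : (j0 :: rest').IsChain (fun u v => z' u = subMat A a u v * z' v) :=
            (List.isChain_cons_cons.1 hz'ty).2
          have h3 : j0.1 :: rest'.map Subtype.val = (j0 :: rest').map Subtype.val := rfl
          rw [h3, List.isChain_map]
          refine h2.imp ?_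
          intro u v huv
          show z u.1 = A u.1 v.1 * z v.1
          rw [hzval_ne u.1 u.2, hzval_ne v.1 v.2]
          exact huv
    exact hpath_w.trans
      ((((joined_EsetSubG hA ⟨a', hia'⟩ (hsubconn a) hy_a hz_a).mono (hsubset a)).trans
        ((joined_EsetSubG hA ⟨a, haa⟩ (hsubconn a') hz_i hy'_a').mono (hsubset a'))).trans
        hpath_w'.symm)

theorem EsetSub_PWLConnected {n : ℕ} (hn : 2 ≤ n) (A : Matrix (Fin n) (Fin n) ℝ)
    (hA : IsReciprocal A) :
    ∀ i : Fin n, PWLConnected (EsetSub A i) := by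
  intro i
  have hone_lt : 1 < Fintype.card (Fin n) := by
    rw [Fintype.card_fin]
    omega
  obtain ⟨j, hj⟩ := Fintype.exists_ne_of_one_lt_card hone_lt i
  haveI : Nonempty {x : Fin n // x ≠ i} := ⟨⟨j, hj⟩⟩
  have hcardsub : Fintype.card {x : Fin n // x ≠ i} = n - 1 := by
    have h1 : Fintype.card {x : Fin n // ¬ x = i} =
        Fintype.card (Fin n) - Fintype.card {x : Fin n // x = i} := Fintype.card_subtype_compl _
    rw [Fintype.card_subtype_eq, Fintype.card_fin] at h1
    exact h1
  have hconn : PWLConnected (Eset (subMat A i)) :=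
    Eset_PWLConnected (n - 1) {x : Fin n // x ≠ i} (by infer_instance) (by infer_instance)
      inferInstance hcardsub _ (recip_sub hA i)
  intro x hx y hy
  have hx' : x ∈ EsetSubG A i := hx
  have hy' : y ∈ EsetSubG A i := hy
  exact joined_EsetSubG hA ⟨j, hj⟩ hconn hx' hy'
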